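/- In the setting of the previous statement, suppose additionally l*(X) = l(X) + [D,X] where D = D† and l*(X) = l(X†)†. Then ȷ is a ♭-representation with respect to the metric G = [[0,0,I],[0,I,0],[I,0,D]]: ȷ(X†) = G^{-1} ȷ(X)† G for all X ∈ B. -/

import Mathlib

open ContinuousLinearMap

variable {H K : Type*} [NormedAddCommGroup H] [InnerProductSpace ℂ H] [CompleteSpace H]
  [NormedAddCommGroup K] [InnerProductSpace ℂ K] [CompleteSpace K]

/-- The Hilbert space `H ⊕ K ⊕ H`. -/
abbrev TripleSum (H K : Type*) [NormedAddCommGroup H] [InnerProductSpace ℂ H]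
    [NormedAddCommGroup K] [InnerProductSpace ℂ K] : Type _ :=
  WithLp 2 (H × WithLp 2 (K × H))

/-- The triple `(x, y, z) ∈ H ⊕ K ⊕ H`. -/
noncomputable def mk3 (x : H) (y : K) (z : H) : TripleSum H K :=
  (WithLp.equiv 2 _).symm (x, (WithLp.equiv 2 _).symm (y, z))

/-- If moreover `l*(X) = l(X) + [D,X]` with `D = D†`, then the block map
`ȷ(X) = [[X, k*(X), l(X)],[0, j(X), k(X)],[0,0,X]]` is a `♭`-representation with respect
to the metric `G = [[0,0,I],[0,I,0],[I,0,D]]`: `ȷ(X†) = G⁻¹ ȷ(X)† G`. -/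
theorem stmt13
    (j : (H →L[ℂ] H) → (K →L[ℂ] K))
    (hjm : ∀ X Z, j (X * Z) = j X * j Z) (hj1 : j 1 = 1)
    (hjs : ∀ X, j (star X) = star (j X))
    (k : (H →L[ℂ] H) → (H →L[ℂ] K))
    (hk : ∀ X Z, k (X * Z) = (j X) ∘L (k Z) + (k X) ∘L Z)
    (kst : (H →L[ℂ] H) → (K →L[ℂ] H))
    (hkst : ∀ X, kst X = adjoint (k (star X)))
    (l : (H →L[ℂ] H) → (H →L[ℂ] H))
    (hl : ∀ X Z, l (star X * Z) =
      star X * l Z + l (star X) * Z + (kst (star X)) ∘L (k Z))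
    (D : H →L[ℂ] H) (hD : IsSelfAdjoint D)
    (hlst : ∀ X, star (l (star X)) = l X + (D * X - X * D))
    (J : (H →L[ℂ] H) → (TripleSum H K →L[ℂ] TripleSum H K))
    (hJ : ∀ (X : H →L[ℂ] H) (x : H) (y : K) (z : H),
      J X (mk3 x y z) = mk3 (X x + kst X y + l X z) (j X y + k X z) (X z))
    (G Ginv : TripleSum H K →L[ℂ] TripleSum H K)
    (hG : ∀ (x : H) (y : K) (z : H), G (mk3 x y z) = mk3 z y (x + D z))
    (hGinv : ∀ (x : H) (y : K) (z : H), Ginv (mk3 x y z) = mk3 (-(D x) + z) y x) :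
    ∀ X : H →L[ℂ] H, J (star X) = Ginv ∘L (adjoint (J X)) ∘L G := by

  intro X
  have inner_mk3 : ∀ (x : H) (y : K) (z : H) (x' : H) (y' : K) (z' : H),
      (inner ℂ (mk3 x y z) (mk3 x' y' z') : ℂ) = inner ℂ x x' + inner ℂ y y' + inner ℂ z z' := by
    intro x y z x' y' z'
    simp [mk3, WithLp.prod_inner_apply]; ring
  have hDadj : adjoint D = D := isSelfAdjoint_iff'.mp hD
  have h1 : star X = adjoint X := star_eq_adjoint X
  have h2 : j (star X) = adjoint (j X) := by rw [hjs, star_eq_adjoint]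
  have h3 : kst (star X) = adjoint (k X) := by rw [hkst, star_star]
  have h5 : l (star X) = adjoint (l X + (D * X - X * D)) := by
    rw [← star_eq_adjoint, ← hlst X, star_star]
  have hGG : ∀ w : TripleSum H K, Ginv (G w) = w := by
    intro w
    rw [show w = mk3 w.ofLp.1 w.ofLp.2.ofLp.1 w.ofLp.2.ofLp.2 from rfl, hG, hGinv]
    have : -(D w.ofLp.2.ofLp.2) + (w.ofLp.1 + D w.ofLp.2.ofLp.2) = w.ofLp.1 := by abel
    rw [this]
  have hadj : G ∘L J (star X) ∘L Ginv = adjoint (J X) := by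
    rw [eq_adjoint_iff]
    intro u v
    rw [show u = mk3 u.ofLp.1 u.ofLp.2.ofLp.1 u.ofLp.2.ofLp.2 from rfl, show v = mk3 v.ofLp.1 v.ofLp.2.ofLp.1 v.ofLp.2.ofLp.2 from rfl,
      comp_apply, comp_apply, hGinv, hJ, hG, hJ, inner_mk3, inner_mk3]
    simp only [h2, h3, h5, hkst X]
    simp only [h1]
    simp only [map_add, map_neg, inner_add_left, inner_add_right,
      inner_sub_right, inner_neg_left, adjoint_inner_left, adjoint_inner_right,
      mul_apply_eq_comp, add_apply, sub_apply]
    rw [show D ((adjoint X) u.ofLp.1) = (adjoint D) ((adjoint X) u.ofLp.1) from by rw [hDadj],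
      show (D : H →L[ℂ] H) u.ofLp.1 = (adjoint D) u.ofLp.1 from by rw [hDadj]]
    simp only [adjoint_inner_left]
    ring
  ext u
  rw [← hadj]
  simp only [comp_apply, hGG]
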